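/- Let δ ∈ (0,1) and ε > 0 be constants, and for each n ≥ 2 let (K_n, λ) be a random simple temporal graph on n vertices. Let k_0(n) = 2 ln n / ln(1/δ) and set k_n = ⌈(1+ε)·k_0(n)⌉. Then E[X^{(k_n)}] → 0 as n → ∞. -/

import Mathlib

open MeasureTheory ProbabilityTheory
open scoped ENNReal

/-- The edge set of the complete graph `K_n` on vertex set `Fin n`:
unordered pairs of distinct vertices. -/
def EdgeKn (n : ℕ) : Type := {e : Sym2 (Fin n) // ¬ e.IsDiag}

/-- `Q` is a `δ`-temporal clique for the labeling `lam` if any two edges with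
both endpoints in `Q` carry labels at most `δ` apart. -/
def IsTemporalClique {n : ℕ} (lam : EdgeKn n → ℝ) (δ : ℝ) (Q : Finset (Fin n)) : Prop :=
  ∀ e e' : EdgeKn n, (∀ v ∈ e.1, v ∈ Q) → (∀ v ∈ e'.1, v ∈ Q) →
    |lam e - lam e'| ≤ δ

open scoped Classical in
/-- The number of `k`-element vertex subsets of `Fin n` that are `δ`-temporal cliques. -/
noncomputable def cliqueCount {n : ℕ} (lam : EdgeKn n → ℝ) (δ : ℝ) (k : ℕ) : ℕ :=
  ((Finset.univ.powersetCard k).filter (fun Q => IsTemporalClique lam δ Q)).card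

noncomputable instance (n : ℕ) : Fintype (EdgeKn n) := by
  unfold EdgeKn
  classical
  infer_instance

open scoped Classical in
/-- The number of edges with both endpoints in `Q` is `Q.card.choose 2`. -/
lemma card_edgesIn {n : ℕ} (Q : Finset (Fin n)) :
    (Finset.univ.filter (fun e : EdgeKn n => ∀ v ∈ e.1, v ∈ Q)).card = Q.card.choose 2 := by
  classical
  rw [← Sym2.card_image_offDiag Q]
  refine Finset.card_bij (fun e _ => e.1) ?_ ?_ ?_
  · rintro ⟨z, hz⟩ he
    replace he := Finset.mem_filter.1 he
    induction z using Sym2.inductionOn with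
    | hf a b =>
      have ha : a ∈ Q := he.2 a (by simp)
      have hb : b ∈ Q := he.2 b (by simp)
      have hab : a ≠ b := by simpa [Sym2.mk_isDiag_iff] using hz
      exact Finset.mem_image.2 ⟨(a, b), Finset.mem_offDiag.2 ⟨ha, hb, hab⟩, rfl⟩
  · intro e₁ h₁ e₂ h₂ h
    exact Subtype.ext h
  · intro z hz
    obtain ⟨⟨a, b⟩, hab, rfl⟩ := Finset.mem_image.1 hz
    obtain ⟨ha, hb, hne⟩ := Finset.mem_offDiag.1 hab
    refine ⟨⟨s(a, b), by simpa [Sym2.mk_isDiag_iff] using hne⟩, ?_, rfl⟩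
    refine Finset.mem_filter.2 ⟨Finset.mem_univ _, ?_⟩
    intro v hv
    rcases Sym2.mem_iff.1 hv with rfl | rfl
    · exact ha
    · exact hb

lemma measurableSet_cliqueEvent {n : ℕ} {Ω : Type*} [MeasurableSpace Ω]
    (lam : EdgeKn n → Ω → ℝ) (hmeas : ∀ e, Measurable (lam e)) (δ : ℝ)
    (Q : Finset (Fin n)) :
    MeasurableSet {ω | IsTemporalClique (fun e => lam e ω) δ Q} := by
  have h : {ω | IsTemporalClique (fun e => lam e ω) δ Q} =
      ⋂ (e : EdgeKn n) (e' : EdgeKn n) (_ : ∀ v ∈ e.1, v ∈ Q) (_ : ∀ v ∈ e'.1, v ∈ Q),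
        {ω | |lam e ω - lam e' ω| ≤ δ} := by
    ext ω
    simp only [Set.mem_setOf_eq, Set.mem_iInter, IsTemporalClique]
  rw [h]
  refine MeasurableSet.iInter fun e => MeasurableSet.iInter fun e' =>
    MeasurableSet.iInter fun _ => MeasurableSet.iInter fun _ => ?_
  exact measurableSet_le ((hmeas e).sub (hmeas e')).abs measurable_const

open scoped Classical in
/-- Per-clique probability bound via a grid covering argument. -/
lemma prob_clique_le
    {n : ℕ} {Ω : Type*} [MeasurableSpace Ω] (P : Measure Ω) [IsProbabilityMeasure P]
    (lam : EdgeKn n → Ω → ℝ) (hmeas : ∀ e, Measurable (lam e))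
    (hindep : iIndepFun lam P)
    (hunif : ∀ e, Measure.map (lam e) P = (volume : Measure ℝ).restrict (Set.Icc 0 1))
    (δ δ' : ℝ) (hδ0 : 0 < δ) (hδδ' : δ < δ') (Q : Finset (Fin n)) (hQ : 2 ≤ Q.card) :
    (P {ω | IsTemporalClique (fun e => lam e ω) δ Q}).toReal ≤
      ((⌈1 / (δ' - δ)⌉₊ : ℝ) + 1) * δ' ^ (Q.card.choose 2) := by
  classical
  set step : ℝ := δ' - δ with hstep_def
  have hstep : 0 < step := by rw [hstep_def]; linarith
  set M : ℕ := ⌈1 / step⌉₊ with hM_def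
  set s : Finset (EdgeKn n) :=
    Finset.univ.filter (fun e : EdgeKn n => ∀ v ∈ e.1, v ∈ Q) with hs_def
  have hscard : s.card = Q.card.choose 2 := card_edgesIn Q
  have hm_pos : 0 < Q.card.choose 2 := Nat.choose_pos hQ
  have hne : s.Nonempty := Finset.card_pos.1 (by rw [hscard]; exact hm_pos)
  have hδ'0 : 0 < δ' := lt_trans hδ0 hδδ'
  -- basic facts about the uniform distribution
  have hpre : ∀ (e : EdgeKn n) (S : Set ℝ), MeasurableSet S →
      P (lam e ⁻¹' S) = volume (S ∩ Set.Icc 0 1) := by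
    intro e S hS
    rw [← Measure.map_apply (hmeas e) hS, hunif e, Measure.restrict_apply hS]
  have hsingle : ∀ (e : EdgeKn n) (a b : ℝ),
      P (lam e ⁻¹' Set.Icc a b) ≤ ENNReal.ofReal (b - a) := by
    intro e a b
    rw [hpre e _ measurableSet_Icc]
    refine le_trans (measure_mono Set.inter_subset_left) ?_
    rw [Real.volume_Icc]
  have hbad : ∀ e : EdgeKn n, P (lam e ⁻¹' (Set.Icc (0:ℝ) 1)ᶜ) = 0 := by
    intro e
    rw [hpre e _ measurableSet_Icc.compl, Set.compl_inter_self, measure_empty]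
  -- the covering inclusion
  have hsub : {ω | IsTemporalClique (fun e => lam e ω) δ Q} ⊆
      (⋃ q ∈ Finset.range (M + 1), ⋂ e ∈ s,
        lam e ⁻¹' Set.Icc ((q : ℝ) * step) ((q : ℝ) * step + δ')) ∪
      (⋃ e ∈ s, lam e ⁻¹' (Set.Icc (0:ℝ) 1)ᶜ) := by
    intro ω hω
    simp only [Set.mem_setOf_eq] at hω
    by_cases hall : ∀ e ∈ s, lam e ω ∈ Set.Icc (0:ℝ) 1
    · left
      obtain ⟨e₀, he₀, ht⟩ := Finset.exists_mem_eq_inf' hne (fun e => lam e ω)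
      set t : ℝ := s.inf' hne (fun e => lam e ω) with ht_def
      have ht0 : 0 ≤ t := by rw [ht]; exact (hall e₀ he₀).1
      have ht1 : t ≤ 1 := by rw [ht]; exact (hall e₀ he₀).2
      set q : ℕ := ⌊t / step⌋₊ with hq_def
      have hqM : q ∈ Finset.range (M + 1) := by
        have h1 : t / step ≤ 1 / step := by gcongr
        have h2 : q ≤ M := le_trans (Nat.floor_mono h1) (Nat.floor_le_ceil _)
        exact Finset.mem_range.2 (Nat.lt_succ_of_le h2)
      refine Set.mem_biUnion hqM ?_
      have hqt : (q : ℝ) * step ≤ t := by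
        have hdiv : (q : ℝ) ≤ t / step := Nat.floor_le (div_nonneg ht0 hstep.le)
        exact (le_div_iff₀ hstep).1 hdiv
      have htq : t < ((q : ℝ) + 1) * step := by
        have := Nat.lt_floor_add_one (t / step)
        calc t = t / step * step := by field_simp
        _ < ((q : ℝ) + 1) * step := by
            apply mul_lt_mul_of_pos_right _ hstep
            exact_mod_cast this
      refine Set.mem_biInter ?_
      intro e he
      have hcond : ∀ v ∈ e.1, v ∈ Q := by
        have h₁ := he
        rw [hs_def] at h₁
        exact (Finset.mem_filter.1 h₁).2
      have hcond₀ : ∀ v ∈ e₀.1, v ∈ Q := by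
        have h₀ := he₀
        rw [hs_def] at h₀
        exact (Finset.mem_filter.1 h₀).2
      have habs := abs_le.1 (hω e e₀ hcond hcond₀)
      have hinf : t ≤ lam e ω := Finset.inf'_le _ he
      constructor
      · exact le_trans hqt hinf
      · have h1 : lam e ω ≤ lam e₀ ω + δ := by linarith [habs.2]
        have h2 : lam e₀ ω = t := ht.symm
        have : lam e ω ≤ t + δ := by rw [← h2]; exact h1
        have hδ'eq : step + δ = δ' := by rw [hstep_def]; ring
        nlinarith [htq]
    · right
      push_neg at hall
      obtain ⟨e, he, hout⟩ := hall
      exact Set.mem_biUnion he (by simpa using hout)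
  -- the measure computation
  have hmain : P {ω | IsTemporalClique (fun e => lam e ω) δ Q} ≤
      ((M : ℝ≥0∞) + 1) * ENNReal.ofReal δ' ^ (Q.card.choose 2) := by
    refine le_trans (measure_mono hsub) ?_
    refine le_trans (measure_union_le _ _) ?_
    have hzero : P (⋃ e ∈ s, lam e ⁻¹' (Set.Icc (0:ℝ) 1)ᶜ) = 0 := by
      refine (measure_biUnion_null_iff s.countable_toSet).2 ?_
      intro e _
      exact hbad e
    rw [hzero, add_zero]
    refine le_trans (measure_biUnion_finset_le _ _) ?_
    have hterm : ∀ q ∈ Finset.range (M + 1),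
        P (⋂ e ∈ s, lam e ⁻¹' Set.Icc ((q : ℝ) * step) ((q : ℝ) * step + δ')) ≤
          ENNReal.ofReal δ' ^ (Q.card.choose 2) := by
      intro q _
      have hprod := hindep.meas_biInter (S := s)
        (s := fun e => lam e ⁻¹' Set.Icc ((q : ℝ) * step) ((q : ℝ) * step + δ'))
        (fun e _ => ⟨Set.Icc ((q : ℝ) * step) ((q : ℝ) * step + δ'), measurableSet_Icc, rfl⟩)
      rw [hprod]
      calc ∏ e ∈ s, P (lam e ⁻¹' Set.Icc ((q : ℝ) * step) ((q : ℝ) * step + δ'))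
          ≤ ∏ _e ∈ s, ENNReal.ofReal δ' := by
            refine Finset.prod_le_prod' fun e _ => ?_
            have := hsingle e ((q : ℝ) * step) ((q : ℝ) * step + δ')
            simpa using this
        _ = ENNReal.ofReal δ' ^ (Q.card.choose 2) := by
            rw [Finset.prod_const, hscard]
    refine le_trans (Finset.sum_le_sum hterm) ?_
    rw [Finset.sum_const, Finset.card_range, nsmul_eq_mul]
    simp
  -- pass to real numbers
  have hfin : ((M : ℝ≥0∞) + 1) * ENNReal.ofReal δ' ^ (Q.card.choose 2) ≠ ⊤ := by
    refine ENNReal.mul_ne_top ?_ ?_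
    · simp
    · exact ENNReal.pow_ne_top ENNReal.ofReal_ne_top
  have := ENNReal.toReal_mono hfin hmain
  refine le_trans this ?_
  rw [ENNReal.toReal_mul, ENNReal.toReal_pow, ENNReal.toReal_ofReal hδ'0.le]
  gcongr
  simp [ENNReal.toReal_add]

open Filter in
/-- For constants `δ ∈ (0,1)` and `ε > 0`, with `k₀(n) = 2 ln n / ln(1/δ)`
and `k_n = ⌈(1+ε) k₀(n)⌉`, the expected number of `δ`-temporal cliques of size `k_n`
in the random simple temporal graph `(K_n, λ)` tends to `0` as `n → ∞`. -/
theorem stmt8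
    (δ : ℝ) (hδ0 : 0 < δ) (hδ1 : δ < 1) (ε : ℝ) (hε : 0 < ε)
    {Ω : ℕ → Type*} [∀ n, MeasurableSpace (Ω n)]
    (P : ∀ n, Measure (Ω n)) (hP : ∀ n, IsProbabilityMeasure (P n))
    (lam : ∀ n, EdgeKn n → Ω n → ℝ) (hmeas : ∀ n e, Measurable (lam n e))
    (hindep : ∀ n, iIndepFun (lam n) (P n))
    (hunif : ∀ n e, Measure.map (lam n e) (P n) = (volume : Measure ℝ).restrict (Set.Icc 0 1))
    (kseq : ℕ → ℕ)
    (hk : ∀ n, kseq n = ⌈(1 + ε) * (2 * Real.log n / Real.log (1/δ))⌉₊) :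
    Tendsto (fun n => ∫ ω, (cliqueCount (fun e => lam n e ω) δ (kseq n) : ℝ) ∂(P n))
      atTop (nhds 0) := by
  classical
  set L : ℝ := Real.log (1 / δ) with hL_def
  have hL : 0 < L := by
    rw [hL_def]
    apply Real.log_pos
    rw [lt_div_iff₀ hδ0]
    linarith
  set c : ℝ := (2 + ε) / (2 + 2 * ε) with hc_def
  have hc0 : 0 < c := by
    rw [hc_def]; positivity
  have hc1 : c < 1 := by
    rw [hc_def, div_lt_one (by linarith)]
    linarith
  set δ' : ℝ := δ ^ c with hδ'_def
  have hδ'0 : 0 < δ' := Real.rpow_pos_of_pos hδ0 c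
  have hδδ' : δ < δ' := by
    have h := Real.rpow_lt_rpow_of_exponent_gt hδ0 hδ1 hc1
    rw [Real.rpow_one] at h
    exact h
  have hδ'1 : δ' < 1 := Real.rpow_lt_one hδ0.le hδ1 hc0
  have hlogδ' : Real.log δ' = c * Real.log δ := Real.log_rpow hδ0 c
  have hlogδ : Real.log δ = -L := by
    rw [hL_def, one_div, Real.log_inv]; ring
  set L' : ℝ := -Real.log δ' with hL'_def
  have hL'0 : 0 < L' := by
    rw [hL'_def]
    exact neg_pos.2 (Real.log_neg hδ'0 hδ'1)
  have hLL' : L' = c * L := by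
    rw [hL'_def, hlogδ', hlogδ]; ring
  have hkey : (1 + ε) * (2 / L) * (L' / 2) = 1 + ε / 2 := by
    rw [hLL', hc_def]
    field_simp
  set M : ℕ := ⌈1 / (δ' - δ)⌉₊ with hM_def
  set mm : ℕ → ℕ := fun n => (kseq n).choose 2 with hmm_def
  -- expectation formula
  have hnonneg : ∀ n, 0 ≤ ∫ ω, (cliqueCount (fun e => lam n e ω) δ (kseq n) : ℝ) ∂ (P n) :=
    fun n => integral_nonneg fun ω => by positivity
  have hexp : ∀ n, ∫ ω, (cliqueCount (fun e => lam n e ω) δ (kseq n) : ℝ) ∂ (P n) =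
      ∑ Q ∈ Finset.univ.powersetCard (kseq n),
        ((P n) {ω | IsTemporalClique (fun e => lam n e ω) δ Q}).toReal := by
    intro n
    haveI := hP n
    have hfun : ∀ ω, (cliqueCount (fun e => lam n e ω) δ (kseq n) : ℝ) =
        ∑ Q ∈ Finset.univ.powersetCard (kseq n),
          Set.indicator {ω' | IsTemporalClique (fun e => lam n e ω') δ Q} (fun _ => (1:ℝ)) ω := by
      intro ω
      rw [cliqueCount, Finset.card_filter]
      push_cast
      refine Finset.sum_congr rfl fun Q _ => ?_
      rw [Set.indicator_apply]
      simp only [Set.mem_setOf_eq]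
    simp_rw [hfun]
    rw [integral_finset_sum _
      (fun Q _ => (integrable_const (1:ℝ)).indicator
        (measurableSet_cliqueEvent (lam n) (hmeas n) δ Q))]
    refine Finset.sum_congr rfl fun Q _ => ?_
    rw [integral_indicator_const (1:ℝ) (measurableSet_cliqueEvent (lam n) (hmeas n) δ Q)]
    simp
    rfl
  -- eventual facts
  have hlogtends : Tendsto (fun n : ℕ => Real.log n) atTop atTop :=
    Real.tendsto_log_atTop.comp tendsto_natCast_atTop_atTop
  have hev1 : ∀ᶠ n : ℕ in atTop, 2 ≤ kseq n := by
    have h2 : Tendsto (fun n : ℕ => (1 + ε) * (2 * Real.log n / L)) atTop atTop := by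
      have h3 : Tendsto (fun n : ℕ => ((1 + ε) * 2 / L) * Real.log n) atTop atTop :=
        hlogtends.const_mul_atTop (by positivity)
      refine h3.congr fun n => by field_simp
    filter_upwards [h2.eventually_ge_atTop 2] with n hn
    have h4 : (2 : ℝ) ≤ (kseq n : ℝ) := by
      rw [hk n]
      exact le_trans hn (Nat.le_ceil _)
    exact_mod_cast h4
  have hev2 : ∀ᶠ n : ℕ in atTop, L' / 2 + 1 ≤ (ε / 2) * Real.log n := by
    have h5 : Tendsto (fun n : ℕ => (ε / 2) * Real.log n) atTop atTop :=
      hlogtends.const_mul_atTop (by positivity)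
    exact h5.eventually_ge_atTop _
  have hev3 : ∀ᶠ n : ℕ in atTop, 2 ≤ n := eventually_ge_atTop 2
  set c' : ℝ := (1 + ε) * 2 / L with hc'_def
  -- key decay bound
  have hgbound : ∀ᶠ n : ℕ in atTop,
      (kseq n : ℝ) * Real.log n + (mm n : ℝ) * Real.log δ' ≤ -(c' * Real.log n) := by
    filter_upwards [hev1, hev2, hev3] with n h1 h2 h3
    have hk2 : (2 : ℝ) ≤ (kseq n : ℝ) := by exact_mod_cast h1
    have hlogn : 0 < Real.log n := Real.log_pos (by exact_mod_cast h3)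
    have hklb : (1 + ε) * (2 * Real.log n / L) ≤ (kseq n : ℝ) := by
      rw [hk n]
      exact Nat.le_ceil _
    have hmcast : (mm n : ℝ) = (kseq n : ℝ) * ((kseq n : ℝ) - 1) / 2 := by
      rw [hmm_def]
      exact_mod_cast Nat.cast_choose_two ℝ (kseq n)
    have hkL' : (1 + ε / 2) * Real.log n ≤ (kseq n : ℝ) * (L' / 2) := by
      calc (1 + ε / 2) * Real.log n = ((1 + ε) * (2 / L) * (L' / 2)) * Real.log n := by
            rw [hkey]
        _ = ((1 + ε) * (2 * Real.log n / L)) * (L' / 2) := by ring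
        _ ≤ (kseq n : ℝ) * (L' / 2) :=
            mul_le_mul_of_nonneg_right hklb (by positivity)
    have hstep1 : Real.log n - ((kseq n : ℝ) - 1) * (L' / 2) ≤ -1 := by nlinarith
    have heq : (kseq n : ℝ) * Real.log n + (mm n : ℝ) * Real.log δ' =
        (kseq n : ℝ) * (Real.log n - ((kseq n : ℝ) - 1) * (L' / 2)) := by
      have hld : Real.log δ' = -L' := by rw [hL'_def]; ring
      rw [hmcast, hld]; ring
    rw [heq]
    have hstep2 : (kseq n : ℝ) * (Real.log n - ((kseq n : ℝ) - 1) * (L' / 2)) ≤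
        (kseq n : ℝ) * (-1) := mul_le_mul_of_nonneg_left hstep1 (by linarith)
    have hce : c' * Real.log n = (1 + ε) * (2 * Real.log n / L) := by
      rw [hc'_def]; ring
    nlinarith
  -- eventual upper bound on the expectation
  have hub : ∀ᶠ n : ℕ in atTop,
      (∫ ω, (cliqueCount (fun e => lam n e ω) δ (kseq n) : ℝ) ∂ (P n)) ≤
      ((M : ℝ) + 1) * Real.exp ((kseq n : ℝ) * Real.log n + (mm n : ℝ) * Real.log δ') := by
    filter_upwards [hev1, hev3] with n h1 h3
    haveI := hP n
    rw [hexp n]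
    have hQb : ∀ Q ∈ Finset.univ.powersetCard (kseq n),
        ((P n) {ω | IsTemporalClique (fun e => lam n e ω) δ Q}).toReal ≤
          ((M : ℝ) + 1) * δ' ^ (mm n) := by
      intro Q hQ
      have hQcard : Q.card = kseq n := Finset.mem_powersetCard_univ.1 hQ
      have hb := prob_clique_le (P n) (lam n) (hmeas n) (hindep n) (hunif n)
        δ δ' hδ0 hδδ' Q (by rw [hQcard]; exact h1)
      rw [hQcard] at hb
      simpa [hM_def, hmm_def] using hb
    calc ∑ Q ∈ Finset.univ.powersetCard (kseq n),
          ((P n) {ω | IsTemporalClique (fun e => lam n e ω) δ Q}).toReal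
        ≤ ∑ _Q ∈ Finset.univ.powersetCard (kseq n), ((M : ℝ) + 1) * δ' ^ (mm n) :=
          Finset.sum_le_sum hQb
      _ = (n.choose (kseq n) : ℝ) * (((M : ℝ) + 1) * δ' ^ (mm n)) := by
          rw [Finset.sum_const, Finset.card_powersetCard, Finset.card_univ,
            Fintype.card_fin, nsmul_eq_mul]
      _ ≤ ((n : ℝ) ^ (kseq n)) * (((M : ℝ) + 1) * δ' ^ (mm n)) := by
          have hch : (n.choose (kseq n) : ℝ) ≤ (n : ℝ) ^ (kseq n) := by
            exact_mod_cast Nat.choose_le_pow n (kseq n)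
          have hpos : 0 ≤ ((M : ℝ) + 1) * δ' ^ (mm n) := by positivity
          exact mul_le_mul_of_nonneg_right hch hpos
      _ = ((M : ℝ) + 1) * Real.exp ((kseq n : ℝ) * Real.log n + (mm n : ℝ) * Real.log δ') := by
          have hnpos : (0 : ℝ) < n := by
            have : (2 : ℝ) ≤ (n : ℝ) := by exact_mod_cast h3
            linarith
          have e1 : (n : ℝ) ^ (kseq n) = Real.exp ((kseq n : ℝ) * Real.log n) := by
            rw [← Real.rpow_natCast (n : ℝ) (kseq n), Real.rpow_def_of_pos hnpos, mul_comm]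
          have e2 : δ' ^ (mm n) = Real.exp ((mm n : ℝ) * Real.log δ') := by
            rw [← Real.rpow_natCast δ' (mm n), Real.rpow_def_of_pos hδ'0, mul_comm]
          rw [e1, e2, Real.exp_add]
          ring
  -- the upper bound tends to zero
  have hBtends : Tendsto
      (fun n : ℕ => ((M : ℝ) + 1) *
        Real.exp ((kseq n : ℝ) * Real.log n + (mm n : ℝ) * Real.log δ'))
      atTop (nhds 0) := by
    have hgt : Tendsto
        (fun n : ℕ => (kseq n : ℝ) * Real.log n + (mm n : ℝ) * Real.log δ') atTop atBot := by
      refine tendsto_atBot_mono' atTop hgbound ?_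
      refine tendsto_neg_atBot_iff.2 ?_
      exact hlogtends.const_mul_atTop (by positivity)
    have h6 := (Real.tendsto_exp_atBot.comp hgt).const_mul ((M : ℝ) + 1)
    simpa using h6
  exact tendsto_of_tendsto_of_tendsto_of_le_of_le' tendsto_const_nhds hBtends
    (Eventually.of_forall hnonneg) hub
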